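/- arXiv:1911.07956 — 8 statements merged into one kernel-verified Lean document; each statement's English description precedes it below -/
import Mathlib

section
/- Let h(w,g) = (1/2)‖g·A w/‖w‖ − y‖² with A ∈ ℝ^{m×d} full row rank (so λ_min(AAᵀ) > 0). If (w,g) with w ≠ 0 is a stationary point of h (both partial derivatives vanish), then either h(w,g) = 0, or g = 0 and yᵀ A w = 0. -/
set_option autoImplicit false
set_option maxHeartbeats 800000

/-- For `h(w,g) = ½‖(g/‖w‖)·Aw − y‖²` with `AAᵀ` positive definite, any
stationary point `(w,g)` with `w ≠ 0` (both partial derivatives vanish) satisfies either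
`h(w,g) = 0`, or `g = 0` and `yᵀ A w = 0`. -/
theorem stmt1 (m d : ℕ)
    (A : EuclideanSpace ℝ (Fin d) →L[ℝ] EuclideanSpace ℝ (Fin m))
    (hA : ∀ v : EuclideanSpace ℝ (Fin m), v ≠ 0 →
      0 < (inner ℝ (A ((ContinuousLinearMap.adjoint A) v)) v : ℝ))
    (y : EuclideanSpace ℝ (Fin m))
    (h : EuclideanSpace ℝ (Fin d) → ℝ → ℝ)
    (hdef : ∀ w g, h w g = (1/2) * ‖(g / ‖w‖) • (A w) - y‖^2)
    (w : EuclideanSpace ℝ (Fin d)) (g : ℝ) (hw : w ≠ 0)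
    (hstatw : fderiv ℝ (fun w' => h w' g) w = 0)
    (hstatg : deriv (fun g' => h w g') g = 0) :
    h w g = 0 ∨ (g = 0 ∧ (inner ℝ y (A w) : ℝ) = 0) := by
  have hn : ‖w‖ ≠ 0 := norm_ne_zero_iff.mpr hw
  set r : EuclideanSpace ℝ (Fin m) := (g / ‖w‖) • (A w) - y with hr
  -- Step 1: ⟪r, A w⟫ = 0
  have hrAw : (inner ℝ r (A w) : ℝ) = 0 := by
    set v : EuclideanSpace ℝ (Fin m) := ‖w‖⁻¹ • (A w) with hv
    have key : ∀ g' : ℝ, h w g' = (1/2) * ‖g' • v - y‖^2 := by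
      intro g'
      rw [hdef, hv]
      congr 3
      rw [div_eq_mul_inv, mul_smul]
    have hd : HasDerivAt (fun g' : ℝ => h w g')
        ((1/2) * (2 * (inner ℝ (g • v - y) v : ℝ))) g := by
      have h1 : HasDerivAt (fun g' : ℝ => g' • v - y) v g := by
        simpa using ((hasDerivAt_id g).smul_const v).sub_const y
      have h2 := h1.norm_sq
      have h3 := h2.const_mul (1/2 : ℝ)
      simpa [key] using h3
    have := hd.deriv
    rw [hstatg] at this
    have hgv : (inner ℝ (g • v - y) v : ℝ) = 0 := by linarith [this]
    have hrv : r = g • v - y := by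
      rw [hr, hv]
      congr 1
      rw [div_eq_mul_inv, mul_smul]
    rw [← hrv, hv] at hgv
    rw [real_inner_smul_right] at hgv
    rcases mul_eq_zero.mp hgv with h' | h'
    · exact absurd h' (inv_ne_zero hn)
    · exact h'
  by_cases hg : g = 0
  · right
    refine ⟨hg, ?_⟩
    have : r = -y := by rw [hr, hg]; simp
    rw [this] at hrAw
    rw [inner_neg_left] at hrAw
    have : (inner ℝ y (A w) : ℝ) = 0 := by linarith [hrAw]
    exact this
  · left
    -- Step 2: use fderiv in w
    set c : EuclideanSpace ℝ (Fin d) → ℝ := fun w' => g / ‖w'‖ with hc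
    have hnormdiff : DifferentiableAt ℝ (fun w' : EuclideanSpace ℝ (Fin d) => ‖w'‖) w :=
      ((contDiffAt_norm (𝕜 := ℝ) (n := 1) hw).differentiableAt one_ne_zero)
    have hcdiff : DifferentiableAt ℝ c w := by
      have := (hnormdiff.inv hn).const_mul g
      simp only [hc, div_eq_mul_inv]
      exact this
    set c' := fderiv ℝ c w with hc'
    have hcd : HasFDerivAt c c' w := hcdiff.hasFDerivAt
    have hFd : HasFDerivAt (fun w' => c w' • A w' - y)
        ((c w • (A : EuclideanSpace ℝ (Fin d) →L[ℝ] EuclideanSpace ℝ (Fin m)))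
          + c'.smulRight (A w)) w := by
      exact (hcd.smul A.hasFDerivAt).sub_const y
    have hhd : HasFDerivAt (fun w' => h w' g)
        ((1/2 : ℝ) • (2 • ((innerSL ℝ (c w • A w - y)).comp
          ((c w • (A : EuclideanSpace ℝ (Fin d) →L[ℝ] EuclideanSpace ℝ (Fin m)))
            + c'.smulRight (A w))))) w := by
      have := (hFd.norm_sq).const_mul (1/2 : ℝ)
      have heq : (fun w' => h w' g) = fun w' => (1/2) * ‖c w' • A w' - y‖^2 := by
        funext w'
        rw [hdef]
      rw [heq]
      convert this using 2
    have hzero := hhd.fderiv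
    rw [hstatw] at hzero
    set v0 := (ContinuousLinearMap.adjoint A) r with hv0
    have happ := congrArg (fun (T : EuclideanSpace ℝ (Fin d) →L[ℝ] ℝ) => T v0) hzero.symm
    simp only [ContinuousLinearMap.zero_apply] at happ
    have hrc : c w • A w - y = r := by rw [hr, hc]
    rw [hrc] at happ
    have hexpand : ((1/2 : ℝ) • (2 • ((innerSL ℝ r).comp
          ((c w • (A : EuclideanSpace ℝ (Fin d) →L[ℝ] EuclideanSpace ℝ (Fin m)))
            + c'.smulRight (A w))))) v0
        = c w * (inner ℝ r (A v0) : ℝ) + c' v0 * (inner ℝ r (A w) : ℝ) := by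
      simp [ContinuousLinearMap.smul_apply, ContinuousLinearMap.add_apply,
        ContinuousLinearMap.comp_apply, ContinuousLinearMap.smulRight_apply,
        innerSL_apply_apply, inner_add_right, real_inner_smul_right]
    rw [hexpand, hrAw, mul_zero, add_zero] at happ
    have hcne : c w ≠ 0 := div_ne_zero hg hn
    have hinner0 : (inner ℝ r (A v0) : ℝ) = 0 := by
      rcases mul_eq_zero.mp happ with h' | h'
      · exact absurd h' hcne
      · exact h'
    -- ⟪r, A (A† r)⟫ = ‖A† r‖² ... use hA to conclude r = 0
    have hr0 : r = 0 := by
      by_contra hrne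
      have := hA r hrne
      rw [real_inner_comm] at hinner0
      rw [← hv0] at this
      linarith [this, hinner0]
    rw [hdef, ← hr, hr0]
    simp
end

section
/- Let h(w,g) = (1/2)‖g·Aw/‖w‖ − y‖² with AAᵀ positive definite. If (w,g) is a stationary point of h with ‖Agw/‖w‖ − y‖² < ‖y‖², then h(w,g) = 0. -/
set_option autoImplicit false
set_option maxHeartbeats 1000000

open RealInnerProductSpace

/-- For `h(w,g) = ½‖(g/‖w‖)·Aw − y‖²` with `AAᵀ` positive definite, a
stationary point `(w,g)` whose loss is strictly below the loss at `g = 0`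
(`‖(g/‖w‖)·Aw − y‖² < ‖y‖²`) is a global minimum: `h(w,g) = 0`. -/
theorem stmt2 (m d : ℕ)
    (A : EuclideanSpace ℝ (Fin d) →L[ℝ] EuclideanSpace ℝ (Fin m))
    (hA : ∀ v : EuclideanSpace ℝ (Fin m), v ≠ 0 →
      0 < (inner ℝ (A ((ContinuousLinearMap.adjoint A) v)) v : ℝ))
    (y : EuclideanSpace ℝ (Fin m))
    (h : EuclideanSpace ℝ (Fin d) → ℝ → ℝ)
    (hdef : ∀ w g, h w g = (1/2) * ‖(g / ‖w‖) • (A w) - y‖^2)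
    (w : EuclideanSpace ℝ (Fin d)) (g : ℝ) (hw : w ≠ 0)
    (hstatw : fderiv ℝ (fun w' => h w' g) w = 0)
    (hstatg : deriv (fun g' => h w g') g = 0)
    (hloss : ‖(g / ‖w‖) • (A w) - y‖^2 < ‖y‖^2) :
    h w g = 0 := by
  have hwn : ‖w‖ ≠ 0 := norm_ne_zero_iff.mpr hw
  have hg : g ≠ 0 := by
    intro h0
    rw [h0] at hloss
    simp at hloss
  set r : EuclideanSpace ℝ (Fin m) := (g / ‖w‖) • (A w) - y with hr
  -- Step 1: inner (A w) r = 0 from hstatg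
  set c : ℝ := ⟪A w, y⟫ with hcdef
  have hgd : HasDerivAt (fun g' => h w g')
      ((‖A w‖^2/(2*‖w‖^2)) * (2*g) - c/‖w‖ * 1) g := by
    have hx : (fun g' => h w g') =
        fun g' => (‖A w‖^2/(2*‖w‖^2)) * g'^2 - (c/‖w‖) * g' + ‖y‖^2/2 := by
      funext g'
      rw [hdef, hcdef]
      rw [norm_sub_sq_real, norm_smul, real_inner_smul_left]
      rw [Real.norm_eq_abs, mul_pow, sq_abs]
      field_simp
    rw [hx]
    have := (((hasDerivAt_pow 2 g).const_mul (‖A w‖^2/(2*‖w‖^2))).sub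
      ((hasDerivAt_id g).const_mul (c/‖w‖))).add_const (‖y‖^2/2)
    simpa [pow_one, mul_comm] using this
  have e1 : (‖A w‖^2/(2*‖w‖^2)) * (2*g) - c/‖w‖ * 1 = 0 := by
    rw [← hgd.deriv]; exact hstatg
  have e2 : g * ‖A w‖^2 = ‖w‖ * c := by
    field_simp at e1
    have h2 : (2*‖w‖) * (g * ‖A w‖^2) = (2*‖w‖) * (‖w‖ * c) := by linear_combination (2*‖w‖) * e1
    exact mul_left_cancel₀ (mul_ne_zero two_ne_zero hwn) h2
  have hAwr : ⟪A w, r⟫ = 0 := by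
    rw [hr, inner_sub_right, real_inner_smul_right, real_inner_self_eq_norm_sq, ← hcdef]
    field_simp
    linarith
  -- Step 2: fderiv in w
  have hnormsq : HasFDerivAt (fun w' : EuclideanSpace ℝ (Fin d) => ‖w'‖^2)
      (2 • (innerSL ℝ w)) w :=
    (hasStrictFDerivAt_norm_sq w).hasFDerivAt
  have hnorm : HasFDerivAt (fun w' : EuclideanSpace ℝ (Fin d) => ‖w'‖)
      ((1 / (2 * ‖w‖)) • (2 • (innerSL ℝ w))) w := by
    have hs := hnormsq.sqrt (by positivity : ‖w‖^2 ≠ 0)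
    simp only [Real.sqrt_sq (norm_nonneg _)] at hs
    exact hs
  have hinv : HasFDerivAt (fun w' : EuclideanSpace ℝ (Fin d) => ‖w'‖⁻¹)
      ((-(‖w‖^2)⁻¹) • ((1 / (2 * ‖w‖)) • (2 • (innerSL ℝ w)))) w :=
    (hasDerivAt_inv hwn).comp_hasFDerivAt w hnorm
  have hc2 : HasFDerivAt (fun w' : EuclideanSpace ℝ (Fin d) => g / ‖w'‖)
      (g • ((-(‖w‖^2)⁻¹) • ((1 / (2 * ‖w‖)) • (2 • (innerSL ℝ w))))) w := by
    simp only [div_eq_mul_inv]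
    exact hinv.const_mul g
  have hφ : HasFDerivAt (fun w' : EuclideanSpace ℝ (Fin d) => (g / ‖w'‖) • (A w') - y)
      (((g / ‖w‖) • (A : EuclideanSpace ℝ (Fin d) →L[ℝ] EuclideanSpace ℝ (Fin m)) +
        (g • ((-(‖w‖^2)⁻¹) • ((1 / (2 * ‖w‖)) • (2 • (innerSL ℝ w))))).smulRight (A w))) w :=
    (hc2.smul (A.hasFDerivAt)).sub_const y
  have hh : HasFDerivAt (fun w' => h w' g)
      ((1/2 : ℝ) • (2 • ((innerSL ℝ r).comp
        ((g / ‖w‖) • (A : EuclideanSpace ℝ (Fin d) →L[ℝ] EuclideanSpace ℝ (Fin m)) +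
        (g • ((-(‖w‖^2)⁻¹) • ((1 / (2 * ‖w‖)) • (2 • (innerSL ℝ w))))).smulRight (A w))))) w := by
    have := hφ.norm_sq.const_mul (1/2 : ℝ)
    simp only [← hdef, ← hr] at this
    exact this
  have hD0 : ∀ v : EuclideanSpace ℝ (Fin d),
      (g / ‖w‖) * ⟪r, A v⟫ +
      (g * (-(‖w‖^2)⁻¹ * ((1 / (2 * ‖w‖)) * (2 * ⟪w, v⟫)))) * ⟪r, A w⟫ = 0 := by
    intro v
    have hz := hh.fderiv.symm.trans hstatw
    have h2 := congrArg (fun (T : EuclideanSpace ℝ (Fin d) →L[ℝ] ℝ) => T v) hz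
    simp only [ContinuousLinearMap.smul_apply, ContinuousLinearMap.comp_apply,
      ContinuousLinearMap.add_apply, ContinuousLinearMap.smulRight_apply,
      ContinuousLinearMap.zero_apply, innerSL_apply_apply, smul_eq_mul,
      inner_smul_right, real_inner_smul_right, inner_add_right, inner_neg_right] at h2
    ring_nf at h2 ⊢
    linarith [h2]
  -- Step 3: conclude r = 0
  have hrAw : ⟪r, A w⟫ = 0 := by rw [real_inner_comm]; exact hAwr
  have key : ∀ v : EuclideanSpace ℝ (Fin d), ⟪r, A v⟫ = 0 := by
    intro v
    have := hD0 v
    rw [hrAw, mul_zero, add_zero] at this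
    have hgw : g / ‖w‖ ≠ 0 := div_ne_zero hg hwn
    exact (mul_eq_zero.mp this).resolve_left hgw
  have hr0 : r = 0 := by
    by_contra hne
    have hpos := hA r hne
    have := key ((ContinuousLinearMap.adjoint A) r)
    rw [real_inner_comm] at this
    rw [this] at hpos
    exact lt_irrefl 0 hpos
  rw [hdef, ← hr, hr0]
  simp
end

section
/- Under rPGD with AAᵀ = I and η = 1/g_t²: ‖A w_{t+1}‖² = (g*)² / ((g*)² + g_t²(1 − ‖A w_t‖²)), where w_{t+1} = v_t/‖v_t‖ and v_t = w_t − (1/g_t)Aᵀr_t. -/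
set_option autoImplicit false

open scoped InnerProductSpace

set_option maxHeartbeats 1000000 in
/-- Under rPGD with `AAᵀ = I` and `η = 1/g_t²`:
`‖A w_{t+1}‖² = (g*)²/((g*)² + g_t²(1 − ‖A w_t‖²))`, with `w_{t+1} = v_t/‖v_t‖` and
`v_t = w_t − (1/g_t)Aᵀr_t`, `r_t = A(g_t w_t − g* w*)`. -/
theorem stmt13 (m d : ℕ)
    (A : EuclideanSpace ℝ (Fin d) →L[ℝ] EuclideanSpace ℝ (Fin m))
    (hA : A.comp (ContinuousLinearMap.adjoint A) =
      ContinuousLinearMap.id ℝ (EuclideanSpace ℝ (Fin m)))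
    (gstar : ℝ) (hgs : 0 < gstar)
    (wstar : EuclideanSpace ℝ (Fin d)) (hws : ‖wstar‖ = 1)
    (hwsrow : wstar ∈ (LinearMap.ker A.toLinearMap)ᗮ)
    (w : EuclideanSpace ℝ (Fin d)) (hw : ‖w‖ = 1)
    (gt : ℝ) (hgt : gt ≠ 0)
    (v : EuclideanSpace ℝ (Fin d))
    (hv : v = w - gt⁻¹ • (ContinuousLinearMap.adjoint A) (A (gt • w - gstar • wstar))) :
    ‖A (‖v‖⁻¹ • v)‖^2 = gstar^2 / (gstar^2 + gt^2 * (1 - ‖A w‖^2)) := by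
  set B := ContinuousLinearMap.adjoint A with hB
  have hAB : ∀ x, A (B x) = x := by
    intro x
    have := congrArg (fun f => f x) hA
    simpa using this
  -- B (A wstar) = wstar
  have hBA : B (A wstar) = wstar := by
    set u := B (A wstar) - wstar with hu
    have hAu : A u = 0 := by
      simp [hu, map_sub, hAB]
    have h1 : ⟪u, wstar⟫_ℝ = 0 := by
      have := hwsrow u (by simpa [LinearMap.mem_ker] using hAu)
      simpa [real_inner_comm] using this
    have h2 : ⟪u, B (A wstar)⟫_ℝ = 0 := by
      rw [real_inner_comm, hB, ContinuousLinearMap.adjoint_inner_left]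
      simp [hAu]
    have h3 : ⟪u, u⟫_ℝ = 0 := by
      rw [hu, inner_sub_right, ← hu, h1, h2, sub_zero]
    have := inner_self_eq_zero.mp h3
    have : u = 0 := this
    rw [hu, sub_eq_zero] at this
    exact this
  -- rewrite v
  have hv' : v = (w - B (A w)) + (gt⁻¹ * gstar) • wstar := by
    rw [hv]
    simp only [map_sub, map_smul, hBA, smul_sub, smul_smul,
      inv_mul_cancel₀ hgt, one_smul]
    abel
  -- A v
  have hAv : A v = (gt⁻¹ * gstar) • A wstar := by
    rw [hv', map_add, map_sub, hAB, sub_self, zero_add, map_smul]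
  have hAws : ‖A wstar‖ ^ 2 = 1 := by
    rw [← real_inner_self_eq_norm_sq, ← ContinuousLinearMap.adjoint_inner_right, ← hB, hBA,
      real_inner_self_eq_norm_sq, hws, one_pow]
  have hinnerwBAw : ⟪w, B (A w)⟫_ℝ = ‖A w‖ ^ 2 := by
    rw [hB, ContinuousLinearMap.adjoint_inner_right, real_inner_self_eq_norm_sq]
  have hBAw : ‖B (A w)‖ ^ 2 = ‖A w‖ ^ 2 := by
    rw [← real_inner_self_eq_norm_sq, hB, ContinuousLinearMap.adjoint_inner_right, ← hB, hAB,
      real_inner_self_eq_norm_sq]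
  have horth : ⟪w - B (A w), (gt⁻¹ * gstar) • wstar⟫_ℝ = 0 := by
    rw [inner_smul_right, inner_sub_left]
    have : ⟪B (A w), wstar⟫_ℝ = ⟪w, wstar⟫_ℝ := by
      rw [hB, ContinuousLinearMap.adjoint_inner_left, ← ContinuousLinearMap.adjoint_inner_right,
        ← hB, hBA]
    rw [this, sub_self, mul_zero]
  have hnv : ‖v‖ ^ 2 = 1 - ‖A w‖ ^ 2 + (gt⁻¹ * gstar) ^ 2 := by
    rw [hv', norm_add_sq_real, horth, mul_zero, add_zero, norm_sub_sq_real, hinnerwBAw, hBAw,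
      norm_smul, hws]
    rw [hw]
    ring_nf
    rw [Real.norm_eq_abs, sq_abs]
    ring
  have hAw1 : ‖A w‖ ^ 2 ≤ 1 := by
    have h1 : ‖B (A w)‖ ^ 2 = ⟪w, B (A w)⟫_ℝ := by rw [hinnerwBAw, hBAw]
    have h2 : ⟪w, B (A w)⟫_ℝ ≤ ‖w‖ * ‖B (A w)‖ := real_inner_le_norm _ _
    have h3 : ‖B (A w)‖ ^ 2 ≤ ‖B (A w)‖ := by
      rw [h1]
      calc ⟪w, B (A w)⟫_ℝ ≤ ‖w‖ * ‖B (A w)‖ := h2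
        _ = ‖B (A w)‖ := by rw [hw, one_mul]
    have h5 : (0:ℝ) ≤ ‖B (A w)‖ := norm_nonneg _
    have h4 : ‖B (A w)‖ ^ 2 ≤ 1 := by
      generalize hb : ‖B (A w)‖ = b at h3 h5
      nlinarith
    rw [← hBAw]
    exact h4
  have hs : (0:ℝ) < (gt⁻¹ * gstar) ^ 2 := by
    have : gt⁻¹ * gstar ≠ 0 := mul_ne_zero (inv_ne_zero hgt) (ne_of_gt hgs)
    positivity
  have hnvpos : 0 < ‖v‖ ^ 2 := by rw [hnv]; linarith
  have hvne : ‖v‖ ≠ 0 := by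
    intro h
    rw [h] at hnvpos
    norm_num at hnvpos
  -- final computation
  have hLHS : ‖A (‖v‖⁻¹ • v)‖ ^ 2 = (‖v‖ ^ 2)⁻¹ * ((gt⁻¹ * gstar) ^ 2) := by
    rw [map_smul, norm_smul, hAv, norm_smul, mul_pow, mul_pow, hAws]
    rw [Real.norm_eq_abs, Real.norm_eq_abs, sq_abs, sq_abs]
    ring
  rw [hLHS, hnv]
  generalize hA2 : ‖A w‖ ^ 2 = a at hAw1 ⊢
  have hgt2 : gt ^ 2 ≠ 0 := pow_ne_zero 2 hgt
  have hden : gstar ^ 2 + gt ^ 2 * (1 - a) ≠ 0 := by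
    have h1 : 0 ≤ gt ^ 2 * (1 - a) := mul_nonneg (sq_nonneg _) (by linarith)
    have h2 : 0 < gstar ^ 2 := by positivity
    linarith
  have hden2 : 1 - a + (gt⁻¹ * gstar) ^ 2 ≠ 0 := by nlinarith
  rw [inv_mul_eq_div, div_eq_div_iff hden2 hden]
  field_simp
  ring
end

section
/- Under rPGD with AAᵀ = I and η = 1/g_t²: 1 − ‖A w_{t+1}‖² = (1 − ‖A w_t‖²)/‖v_t‖². In particular, since ‖w^⊥‖² = 1 − ‖Aw‖² for unit vectors w, the orthogonal component shrinks by factor 1/‖v_t‖². -/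
set_option autoImplicit false

open RealInnerProductSpace

/-- Under rPGD with `AAᵀ = I` and `η = 1/g_t²`:
`1 − ‖A w_{t+1}‖² = (1 − ‖A w_t‖²)/‖v_t‖²`; i.e. the orthogonal component
(`‖w^⊥‖² = 1 − ‖Aw‖²` for unit vectors `w`) shrinks by the factor `1/‖v_t‖²`. -/
theorem stmt14 (m d : ℕ)
    (A : EuclideanSpace ℝ (Fin d) →L[ℝ] EuclideanSpace ℝ (Fin m))
    (hA : A.comp (ContinuousLinearMap.adjoint A) =
      ContinuousLinearMap.id ℝ (EuclideanSpace ℝ (Fin m)))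
    (gstar : ℝ) (hgs : 0 < gstar)
    (wstar : EuclideanSpace ℝ (Fin d)) (hws : ‖wstar‖ = 1)
    (hwsrow : wstar ∈ (LinearMap.ker (A : EuclideanSpace ℝ (Fin d) →ₗ[ℝ] EuclideanSpace ℝ (Fin m)))ᗮ)
    (w : EuclideanSpace ℝ (Fin d)) (hw : ‖w‖ = 1)
    (gt : ℝ) (hgt : gt ≠ 0)
    (v : EuclideanSpace ℝ (Fin d))
    (hv : v = w - gt⁻¹ • (ContinuousLinearMap.adjoint A) (A (gt • w - gstar • wstar))) :
    1 - ‖A (‖v‖⁻¹ • v)‖^2 = (1 - ‖A w‖^2) / ‖v‖^2 := by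
  set B := ContinuousLinearMap.adjoint A with hB
  have hAB : ∀ x, A (B x) = x := by
    intro x
    have := ContinuousLinearMap.ext_iff.mp hA x
    simpa using this
  have hBnorm : ∀ x : EuclideanSpace ℝ (Fin d), ‖B (A x)‖^2 = ‖A x‖^2 := by
    intro x
    have h1 : ‖B (A x)‖^2 = ⟪B (A x), B (A x)⟫ := (real_inner_self_eq_norm_sq _).symm
    have h2 : ⟪B (A x), B (A x)⟫ = ⟪A (B (A x)), A x⟫ := by
      rw [hB, ContinuousLinearMap.adjoint_inner_right]
    rw [h1, h2, hAB, real_inner_self_eq_norm_sq]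
  set u := w - B (A w) with hu_def
  have hAu : A u = 0 := by simp [hu_def, map_sub, hAB]
  have hinner_wBAw : ⟪w, B (A w)⟫ = ‖A w‖^2 := by
    rw [hB, ContinuousLinearMap.adjoint_inner_right, real_inner_self_eq_norm_sq]
  have hu : ‖u‖^2 = 1 - ‖A w‖^2 := by
    have := norm_sub_sq_real w (B (A w))
    rw [hinner_wBAw, hBnorm, hw] at this
    rw [hu_def, this]; ring
  have hveq : v = u + (gstar / gt) • B (A wstar) := by
    rw [hv, hu_def]
    simp only [map_sub, map_smul, smul_sub, smul_smul, inv_mul_cancel₀ hgt, one_smul,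
      div_eq_inv_mul]
    module
  have hortho : ⟪u, B (A wstar)⟫ = 0 := by
    rw [hB, ContinuousLinearMap.adjoint_inner_right, hAu, inner_zero_left]
  have hAwstar : A wstar ≠ 0 := by
    intro h
    have h0 : ⟪wstar, wstar⟫ = 0 :=
      (Submodule.mem_orthogonal _ _).mp hwsrow wstar h
    have : wstar = 0 := by
      have := inner_self_eq_zero.mp h0
      exact this
    rw [this, norm_zero] at hws
    norm_num at hws
  have hnv : ‖v‖^2 = ‖u‖^2 + (gstar / gt)^2 * ‖A wstar‖^2 := by
    rw [hveq, norm_add_sq_real, inner_smul_right, hortho, norm_smul, mul_pow, hBnorm]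
    rw [Real.norm_eq_abs, sq_abs]
    ring
  have hcpos : 0 < (gstar / gt)^2 * ‖A wstar‖^2 := by
    apply mul_pos
    · positivity
    · have : 0 < ‖A wstar‖ := norm_pos_iff.mpr hAwstar
      positivity
  have hvsqpos : 0 < ‖v‖^2 := by
    rw [hnv]
    have : (0:ℝ) ≤ ‖u‖^2 := sq_nonneg _
    linarith
  have hvne : ‖v‖ ≠ 0 := by
    intro h; rw [h] at hvsqpos; norm_num at hvsqpos
  have hAv : A v = (gstar / gt) • A wstar := by
    rw [hveq]
    simp [map_add, map_smul, hAu, hAB]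
  have hAvsq : ‖A v‖^2 = ‖v‖^2 - ‖u‖^2 := by
    rw [hAv, norm_smul, mul_pow, Real.norm_eq_abs, sq_abs, hnv]; ring
  have hLA : ‖A (‖v‖⁻¹ • v)‖^2 = ‖v‖⁻¹^2 * ‖A v‖^2 := by
    rw [map_smul, norm_smul, mul_pow, norm_inv, norm_norm]
  rw [hLA, hAvsq, ← hu]
  field_simp
  ring
end

section
/- Under rPGD with AAᵀ = I, η = 1/g_t², and update g_{t+1} = g_t − γ⟨A w_t, r_t⟩: if g_t < g_{t−1}‖v_{t−1}‖ and γ > 0, g_{t−1}, g_t > 0, then g_{t+1} > g_t. (The scale parameter is strictly increasing.) -/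
set_option autoImplicit false

/-- Under rPGD with `AAᵀ = I`, `η = 1/g_t²`, and scale update
`g_{t+1} = g_t − γ⟨A w_t, r_t⟩` with `r_t = A(g_t w_t − g* w*)`: if
`A w_t = A(g* w*)/(g_{t−1}‖v_{t−1}‖)`, `g_t < g_{t−1}‖v_{t−1}‖`, `γ > 0`, and
`g_{t−1}, g_t > 0`, then `g_{t+1} > g_t` (the scale is strictly increasing). -/
theorem stmt16 (m d : ℕ)
    (A : EuclideanSpace ℝ (Fin d) →L[ℝ] EuclideanSpace ℝ (Fin m))
    (hA : A.comp (ContinuousLinearMap.adjoint A) =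
      ContinuousLinearMap.id ℝ (EuclideanSpace ℝ (Fin m)))
    (gstar : ℝ) (hgs : 0 < gstar)
    (wstar : EuclideanSpace ℝ (Fin d)) (hws : ‖wstar‖ = 1)
    (hwsrow : wstar ∈ (LinearMap.ker A.toLinearMap)ᗮ)
    (gprev gt γ : ℝ) (hγ : 0 < γ) (hgprev : 0 < gprev) (hgt : 0 < gt)
    (vprev : EuclideanSpace ℝ (Fin d)) (hvprev : vprev ≠ 0)
    (wt : EuclideanSpace ℝ (Fin d))
    (hAwt : A wt = (gprev * ‖vprev‖)⁻¹ • A (gstar • wstar))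
    (hlt : gt < gprev * ‖vprev‖) :
    gt < gt - γ * (inner ℝ (A wt) (A (gt • wt - gstar • wstar)) : ℝ) := by
  set c : ℝ := (gprev * ‖vprev‖)⁻¹ with hc
  have hvn : 0 < ‖vprev‖ := norm_pos_iff.2 hvprev
  have hden : 0 < gprev * ‖vprev‖ := mul_pos hgprev hvn
  have hcpos : 0 < c := inv_pos.2 hden
  -- Aᵀ A wstar = wstar
  have hproj : (ContinuousLinearMap.adjoint A) (A wstar) = wstar := by
    set u := (ContinuousLinearMap.adjoint A) (A wstar) - wstar with hu
    have hker : u ∈ LinearMap.ker A.toLinearMap := by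
      have := congrArg (fun T => T (A wstar)) hA
      simp only [ContinuousLinearMap.comp_apply, ContinuousLinearMap.id_apply] at this
      simp [hu, LinearMap.mem_ker, this]
    have h1 : (inner ℝ wstar u : ℝ) = 0 := by
      rw [real_inner_comm]; exact hwsrow u hker
    have h2 : (inner ℝ ((ContinuousLinearMap.adjoint A) (A wstar)) u : ℝ) = 0 := by
      rw [ContinuousLinearMap.adjoint_inner_left]
      have : A u = 0 := hker
      simp [this]
    have : (inner ℝ u u : ℝ) = 0 := by
      rw [hu, inner_sub_left, h1, h2, sub_zero]
    have hu0 : u = 0 := inner_self_eq_zero.1 this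
    have := sub_eq_zero.1 hu0
    simpa [hu] using this
  -- ‖A wstar‖² = 1
  have hAw : (inner ℝ (A wstar) (A wstar) : ℝ) = 1 := by
    rw [← ContinuousLinearMap.adjoint_inner_left, hproj, real_inner_self_eq_norm_sq, hws]
    norm_num
  -- compute the inner product
  have key : (inner ℝ (A wt) (A (gt • wt - gstar • wstar)) : ℝ)
      = c * gstar ^ 2 * (gt * c - 1) := by
    rw [map_sub, map_smul, map_smul, hAwt, map_smul]
    rw [inner_sub_right, inner_smul_right, inner_smul_right]
    simp only [real_inner_smul_left, real_inner_smul_right, hAw]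
    ring
  rw [key]
  have hctlt : gt * c < 1 := by
    rw [hc, mul_inv_lt_iff₀ hden, one_mul]
    exact hlt
  have : c * gstar ^ 2 * (gt * c - 1) < 0 :=
    mul_neg_of_pos_of_neg (mul_pos hcpos (pow_pos hgs 2)) (by linarith)
  nlinarith
end

section
/- Under rPGD with AAᵀ = I and η = 1/g_t²: g_t²‖v_t‖² − g_{t−1}²‖v_{t−1}‖² = (g_t²/‖v_{t−1}‖² − g_{t−1}²)(1 − ‖A w_{t−1}‖²) = (g_t² − g_{t−1}²‖v_{t−1}‖²)(1 − ‖A w_t‖²). -/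
set_option autoImplicit false

open scoped RealInnerProductSpace

section
variable {m d : ℕ}

lemma adj_iso (A : EuclideanSpace ℝ (Fin d) →L[ℝ] EuclideanSpace ℝ (Fin m))
    (hA : A.comp (ContinuousLinearMap.adjoint A) =
      ContinuousLinearMap.id ℝ (EuclideanSpace ℝ (Fin m)))
    (y : EuclideanSpace ℝ (Fin m)) :
    A ((ContinuousLinearMap.adjoint A) y) = y := by
  have := ContinuousLinearMap.ext_iff.mp hA y
  simpa using this

-- P wstar = wstar
lemma proj_fix (A : EuclideanSpace ℝ (Fin d) →L[ℝ] EuclideanSpace ℝ (Fin m))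
    (hA : A.comp (ContinuousLinearMap.adjoint A) =
      ContinuousLinearMap.id ℝ (EuclideanSpace ℝ (Fin m)))
    (ws : EuclideanSpace ℝ (Fin d)) (hws : ws ∈ (LinearMap.ker A.toLinearMap)ᗮ) :
    (ContinuousLinearMap.adjoint A) (A ws) = ws := by
  set z := (ContinuousLinearMap.adjoint A) (A ws) - ws with hz
  have hzker : z ∈ LinearMap.ker A.toLinearMap := by
    have : A z = 0 := by
      simp [hz, map_sub, adj_iso A hA]
    simpa [LinearMap.mem_ker] using this
  have hzorth : z ∈ (LinearMap.ker A.toLinearMap)ᗮ := by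
    refine Submodule.sub_mem _ ?_ hws
    rw [Submodule.mem_orthogonal]
    intro u hu
    have hAu : A u = 0 := hu
    rw [ContinuousLinearMap.adjoint_inner_right, hAu, inner_zero_left]
  have : z = 0 := by
    have := Submodule.inner_right_of_mem_orthogonal hzker hzorth
    exact inner_self_eq_zero.mp this
  have := sub_eq_zero.mp this
  exact this

-- ‖A w‖ ≤ ‖w‖
lemma A_contract (A : EuclideanSpace ℝ (Fin d) →L[ℝ] EuclideanSpace ℝ (Fin m))
    (hA : A.comp (ContinuousLinearMap.adjoint A) =
      ContinuousLinearMap.id ℝ (EuclideanSpace ℝ (Fin m)))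
    (w : EuclideanSpace ℝ (Fin d)) : ‖A w‖ ≤ ‖w‖ := by
  have hPn : ‖(ContinuousLinearMap.adjoint A) (A w)‖ = ‖A w‖ := by
    have h : ⟪(ContinuousLinearMap.adjoint A) (A w), (ContinuousLinearMap.adjoint A) (A w)⟫
        = ⟪A w, A w⟫ := by
      rw [ContinuousLinearMap.adjoint_inner_left, adj_iso A hA]
    have := congrArg Real.sqrt h
    rwa [real_inner_self_eq_norm_sq, real_inner_self_eq_norm_sq,
      Real.sqrt_sq (norm_nonneg _), Real.sqrt_sq (norm_nonneg _)] at this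
  have h1 : ‖A w‖^2 = ⟪w, (ContinuousLinearMap.adjoint A) (A w)⟫ := by
    rw [ContinuousLinearMap.adjoint_inner_right, real_inner_self_eq_norm_sq]
  have h2 : ⟪w, (ContinuousLinearMap.adjoint A) (A w)⟫ ≤ ‖w‖ * ‖A w‖ := by
    calc ⟪w, (ContinuousLinearMap.adjoint A) (A w)⟫
        ≤ ‖w‖ * ‖(ContinuousLinearMap.adjoint A) (A w)‖ := real_inner_le_norm _ _
      _ = ‖w‖ * ‖A w‖ := by rw [hPn]
  rcases eq_or_lt_of_le (norm_nonneg (A w)) with h | h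
  · rw [← h]; exact norm_nonneg w
  · nlinarith [h1, h2]

-- key lemma
lemma key (A : EuclideanSpace ℝ (Fin d) →L[ℝ] EuclideanSpace ℝ (Fin m))
    (hA : A.comp (ContinuousLinearMap.adjoint A) =
      ContinuousLinearMap.id ℝ (EuclideanSpace ℝ (Fin m)))
    (gstar : ℝ) (wstar : EuclideanSpace ℝ (Fin d)) (hws : ‖wstar‖ = 1)
    (hwsrow : wstar ∈ (LinearMap.ker A.toLinearMap)ᗮ)
    (g : ℝ) (hg : g ≠ 0) (w : EuclideanSpace ℝ (Fin d)) (hw : ‖w‖ = 1)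
    (v : EuclideanSpace ℝ (Fin d))
    (hv : v = w - g⁻¹ • (ContinuousLinearMap.adjoint A) (A (g • w - gstar • wstar))) :
    g^2 * ‖v‖^2 = g^2 * (1 - ‖A w‖^2) + gstar^2 ∧ A v = (gstar/g) • A wstar := by
  set P : EuclideanSpace ℝ (Fin d) → EuclideanSpace ℝ (Fin d) :=
    fun x => (ContinuousLinearMap.adjoint A) (A x) with hP
  have hv' : v = (w - P w) + (gstar/g) • wstar := by
    rw [hv]
    have : (ContinuousLinearMap.adjoint A) (A (g • w - gstar • wstar))
        = g • P w - gstar • wstar := by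
      simp only [map_sub, map_smul, hP]
      rw [proj_fix A hA wstar hwsrow]
    rw [this, smul_sub, smul_smul, smul_smul, inv_mul_cancel₀ hg, one_smul]
    rw [div_eq_inv_mul]
    abel
  have hker : A (w - P w) = 0 := by
    simp [hP, map_sub, adj_iso A hA]
  constructor
  · -- norm computation
    have horth : ⟪w - P w, (gstar/g) • wstar⟫ = 0 := by
      have hm : w - P w ∈ LinearMap.ker A.toLinearMap := by simpa [LinearMap.mem_ker] using hker
      have := Submodule.inner_right_of_mem_orthogonal hm hwsrow
      rw [inner_smul_right, this, mul_zero]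
    have hnv : ‖v‖^2 = ‖w - P w‖^2 + ‖(gstar/g) • wstar‖^2 := by
      rw [hv', norm_add_sq_real, horth]; ring
    have hPw : ⟪w, P w⟫ = ‖A w‖^2 := by
      rw [hP]; rw [ContinuousLinearMap.adjoint_inner_right, real_inner_self_eq_norm_sq]
    have hPwn : ‖P w‖^2 = ‖A w‖^2 := by
      rw [hP, ← real_inner_self_eq_norm_sq, ContinuousLinearMap.adjoint_inner_left,
        adj_iso A hA, real_inner_self_eq_norm_sq]
    have hu : ‖w - P w‖^2 = 1 - ‖A w‖^2 := by
      rw [norm_sub_sq_real, hPw, hPwn, hw]; ring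
    have hcs : ‖(gstar/g) • wstar‖^2 = (gstar/g)^2 := by
      rw [norm_smul, hws, mul_one, Real.norm_eq_abs, sq_abs]
    rw [hnv, hu, hcs]
    field_simp
  · rw [hv', map_add, hker, map_smul, zero_add]

end

set_option maxHeartbeats 1000000 in
/-- Under rPGD with `AAᵀ = I` and `η = 1/g_t²`, the recursion identity
`g_t²‖v_t‖² − g_{t−1}²‖v_{t−1}‖² = (g_t²/‖v_{t−1}‖² − g_{t−1}²)(1 − ‖A w_{t−1}‖²)
 = (g_t² − g_{t−1}²‖v_{t−1}‖²)(1 − ‖A w_t‖²)` holds, where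
`v_s = w_s − (1/g_s)Aᵀ A(g_s w_s − g* w*)` and `w_t = v_{t−1}/‖v_{t−1}‖`. -/
theorem stmt17 (m d : ℕ)
    (A : EuclideanSpace ℝ (Fin d) →L[ℝ] EuclideanSpace ℝ (Fin m))
    (hA : A.comp (ContinuousLinearMap.adjoint A) =
      ContinuousLinearMap.id ℝ (EuclideanSpace ℝ (Fin m)))
    (gstar : ℝ) (hgs : 0 < gstar)
    (wstar : EuclideanSpace ℝ (Fin d)) (hws : ‖wstar‖ = 1)
    (hwsrow : wstar ∈ (LinearMap.ker A.toLinearMap)ᗮ)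
    (gprev gt : ℝ) (hgprev : gprev ≠ 0) (hgt : gt ≠ 0)
    (wprev : EuclideanSpace ℝ (Fin d)) (hwprev : ‖wprev‖ = 1)
    (vprev : EuclideanSpace ℝ (Fin d))
    (hvprev : vprev = wprev -
      gprev⁻¹ • (ContinuousLinearMap.adjoint A) (A (gprev • wprev - gstar • wstar)))
    (wt : EuclideanSpace ℝ (Fin d)) (hwt : wt = ‖vprev‖⁻¹ • vprev)
    (vt : EuclideanSpace ℝ (Fin d))
    (hvt : vt = wt -
      gt⁻¹ • (ContinuousLinearMap.adjoint A) (A (gt • wt - gstar • wstar))) :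
    gt^2 * ‖vt‖^2 - gprev^2 * ‖vprev‖^2 =
      (gt^2 / ‖vprev‖^2 - gprev^2) * (1 - ‖A wprev‖^2) ∧
    gt^2 * ‖vt‖^2 - gprev^2 * ‖vprev‖^2 =
      (gt^2 - gprev^2 * ‖vprev‖^2) * (1 - ‖A wt‖^2) := by
  obtain ⟨h1, hAv1⟩ := key A hA gstar wstar hws hwsrow gprev hgprev wprev hwprev vprev hvprev
  -- ‖A wstar‖ = 1
  have hAws : ‖A wstar‖ = 1 := by
    have h : ⟪wstar, (ContinuousLinearMap.adjoint A) (A wstar)⟫ = ‖A wstar‖^2 := by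
      rw [ContinuousLinearMap.adjoint_inner_right, real_inner_self_eq_norm_sq]
    rw [proj_fix A hA wstar hwsrow, real_inner_self_eq_norm_sq, hws] at h
    nlinarith [norm_nonneg (A wstar)]
  -- vprev ≠ 0
  have hAwp : ‖A wprev‖ ≤ 1 := hwprev ▸ A_contract A hA wprev
  have hVpos : 0 < ‖vprev‖ := by
    rcases (norm_nonneg vprev).lt_or_eq with h | h
    · exact h
    · exfalso
      rw [← h] at h1
      have h0 : (0:ℝ) ≤ 1 - ‖A wprev‖^2 := by nlinarith [norm_nonneg (A wprev)]
      nlinarith [mul_nonneg (sq_nonneg gprev) h0, hgs]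
  have hVne : ‖vprev‖ ≠ 0 := ne_of_gt hVpos
  have hwtn : ‖wt‖ = 1 := by
    rw [hwt, norm_smul, Real.norm_eq_abs, abs_inv, abs_of_pos hVpos,
      inv_mul_cancel₀ hVne]
  obtain ⟨h2, _⟩ := key A hA gstar wstar hws hwsrow gt hgt wt hwtn vt hvt
  -- ‖A wt‖^2
  have hAwt : ‖A wt‖^2 = (gstar/gprev)^2 / ‖vprev‖^2 := by
    rw [hwt, map_smul, hAv1, norm_smul, norm_smul, Real.norm_eq_abs, Real.norm_eq_abs,
      abs_inv, abs_of_pos hVpos, hAws]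
    rw [mul_pow, mul_pow, inv_pow, one_pow, mul_one, sq_abs]
    ring
  have ha : (1 - ‖A wprev‖^2) = ‖vprev‖^2 - gstar^2/gprev^2 := by
    field_simp
    nlinarith [h1]
  constructor
  · rw [h2, hAwt, ha]
    field_simp
    ring
  · rw [h2, hAwt]
    field_simp
    ring
end

section
/- Fix δ > 0. Let A ∈ ℝ^{m×d} have singular values 1 = σ_1 ≥ … ≥ σ_m > 0 of AAᵀ (so λ_max(AAᵀ)=1), and let w* be a unit vector in the row space of A, g* > 0. In rPGD with fixed g = g_0 satisfying g_0 ≤ g* σ_m/(2+δ−σ_m) and stepsize η = 1/g_0², the vector v_t = (I − AᵀA)w_t + (g*/g_0)AᵀA w* satisfies ‖v_t‖ ≥ 1 + δ for every unit vector w_t. Consequently ‖w_{T_1}^⊥‖ ≤ (1+δ)^{−T_1}‖w_0^⊥‖ ≤ ε for T_1 = log(‖w_0^⊥‖/ε)/log(1+δ). -/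
set_option autoImplicit false

section Aux

variable {d m : ℕ} (A : EuclideanSpace ℝ (Fin d) →L[ℝ] EuclideanSpace ℝ (Fin m))

private lemma adj_mem_orth (y : EuclideanSpace ℝ (Fin m)) :
    (ContinuousLinearMap.adjoint A) y ∈ (LinearMap.ker (A : EuclideanSpace ℝ (Fin d) →ₗ[ℝ] EuclideanSpace ℝ (Fin m)))ᗮ := by
  rw [Submodule.mem_orthogonal]
  intro x hx
  have hx0 : A x = 0 := hx
  rw [real_inner_comm, ContinuousLinearMap.adjoint_inner_left, hx0, inner_zero_right]

private lemma quad_cs (hmax : ∀ z : EuclideanSpace ℝ (Fin d), ‖A z‖ ≤ ‖z‖)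
    (x y : EuclideanSpace ℝ (Fin d)) :
    ((inner ℝ x y : ℝ) - inner ℝ (A x) (A y))^2 ≤
      ((inner ℝ x x : ℝ) - inner ℝ (A x) (A x)) * ((inner ℝ y y : ℝ) - inner ℝ (A y) (A y)) := by
  set B : EuclideanSpace ℝ (Fin d) → EuclideanSpace ℝ (Fin d) → ℝ :=
    fun a b => (inner ℝ a b : ℝ) - inner ℝ (A a) (A b) with hB
  have hBpos : ∀ a, 0 ≤ B a a := by
    intro a
    have h1 := hmax a
    simp only [hB, real_inner_self_eq_norm_sq]
    nlinarith [norm_nonneg (A a), norm_nonneg a]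
  have hBexp : ∀ t : ℝ, B (x + t • y) (x + t • y)
      = B y y * (t * t) + (2 * B x y) * t + B x x := by
    intro t
    simp only [hB, map_add, map_smul, inner_add_left, inner_add_right,
      real_inner_smul_left, real_inner_smul_right]
    rw [real_inner_comm y x, real_inner_comm (A y) (A x)]
    ring
  have hd := discrim_le_zero (a := B y y) (b := 2 * B x y) (c := B x x)
    (fun t => by rw [← hBexp t]; exact hBpos _)
  rw [discrim] at hd
  show (B x y)^2 ≤ B x x * B y y
  nlinarith [hd]

private lemma contraction (hmax : ∀ z : EuclideanSpace ℝ (Fin d), ‖A z‖ ≤ ‖z‖)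
    {σm : ℝ} (hσ1 : σm ≤ 1)
    (hmin : ∀ z ∈ (LinearMap.ker (A : EuclideanSpace ℝ (Fin d) →ₗ[ℝ] EuclideanSpace ℝ (Fin m)))ᗮ, σm * ‖z‖^2 ≤ ‖A z‖^2)
    (z : EuclideanSpace ℝ (Fin d)) (hz : z ∈ (LinearMap.ker (A : EuclideanSpace ℝ (Fin d) →ₗ[ℝ] EuclideanSpace ℝ (Fin m)))ᗮ) :
    ‖z - (ContinuousLinearMap.adjoint A) (A z)‖ ≤ (1 - σm) * ‖z‖ := by
  set s : EuclideanSpace ℝ (Fin d) := z - (ContinuousLinearMap.adjoint A) (A z) with hs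
  have hsV : s ∈ (LinearMap.ker (A : EuclideanSpace ℝ (Fin d) →ₗ[ℝ] EuclideanSpace ℝ (Fin m)))ᗮ := Submodule.sub_mem _ hz (adj_mem_orth A _)
  have hSinner : ∀ a b : EuclideanSpace ℝ (Fin d),
      (inner ℝ (a - (ContinuousLinearMap.adjoint A) (A a)) b : ℝ)
        = (inner ℝ a b : ℝ) - inner ℝ (A a) (A b) := by
    intro a b
    rw [inner_sub_left, ContinuousLinearMap.adjoint_inner_left]
  have hBle : ∀ a ∈ (LinearMap.ker (A : EuclideanSpace ℝ (Fin d) →ₗ[ℝ] EuclideanSpace ℝ (Fin m)))ᗮ,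
      (inner ℝ a a : ℝ) - inner ℝ (A a) (A a) ≤ (1 - σm) * ‖a‖^2 := by
    intro a ha
    have h1 := hmin a ha
    simp only [real_inner_self_eq_norm_sq]
    nlinarith
  have hBpos : ∀ a : EuclideanSpace ℝ (Fin d), 0 ≤ (inner ℝ a a : ℝ) - inner ℝ (A a) (A a) := by
    intro a
    have h1 := hmax a
    simp only [real_inner_self_eq_norm_sq]
    nlinarith [norm_nonneg (A a), norm_nonneg a]
  have h1 : ‖s‖^2 = (inner ℝ z s : ℝ) - inner ℝ (A z) (A s) := by
    rw [← hSinner z s, ← hs, real_inner_self_eq_norm_sq]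
  have hcs := quad_cs A hmax z s
  have h2 := hBle z hz
  have h3 := hBle s hsV
  have h4 := hBpos z
  have h5 := hBpos s
  have hzn := norm_nonneg z
  have hsn := norm_nonneg s
  have hc : 0 ≤ 1 - σm := by linarith
  -- ‖s‖^4 ≤ ((1-σm) ‖z‖^2) * ((1-σm) ‖s‖^2)
  have h6 : (‖s‖^2)^2 ≤ ((1 - σm) * ‖z‖^2) * ((1 - σm) * ‖s‖^2) := by
    have e : (‖s‖^2)^2 = ((inner ℝ z s : ℝ) - inner ℝ (A z) (A s))^2 := by rw [h1]
    rw [e]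
    exact le_trans hcs (mul_le_mul h2 h3 h5 (by positivity))
  rcases eq_or_lt_of_le hsn with h0 | h0
  · rw [← h0]; exact mul_nonneg hc hzn
  · have h7 : ‖s‖^2 ≤ ((1 - σm) * ‖z‖)^2 := by
      have hpos : 0 < ‖s‖^2 := by positivity
      have := le_of_mul_le_mul_right (by nlinarith [h6] : ‖s‖^2 * ‖s‖^2 ≤ ((1 - σm) * ‖z‖)^2 * ‖s‖^2) hpos
      exact this
    nlinarith [mul_nonneg hc hzn, h7, h0]

end Aux

set_option maxHeartbeats 1000000 in
theorem stmt18 (m d : ℕ)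
    (A : EuclideanSpace ℝ (Fin d) →L[ℝ] EuclideanSpace ℝ (Fin m))
    (hmax : ∀ z : EuclideanSpace ℝ (Fin d), ‖A z‖ ≤ ‖z‖)
    (σm : ℝ) (hσm : 0 < σm)
    (hmin : ∀ z ∈ (LinearMap.ker (A : EuclideanSpace ℝ (Fin d) →ₗ[ℝ] EuclideanSpace ℝ (Fin m)))ᗮ, σm * ‖z‖^2 ≤ ‖A z‖^2)
    (gstar : ℝ) (hgs : 0 < gstar)
    (wstar : EuclideanSpace ℝ (Fin d)) (hws : ‖wstar‖ = 1)
    (hwsrow : wstar ∈ (LinearMap.ker (A : EuclideanSpace ℝ (Fin d) →ₗ[ℝ] EuclideanSpace ℝ (Fin m)))ᗮ)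
    (δ : ℝ) (hδ : 0 < δ)
    (g0 : ℝ) (hg0 : 0 < g0) (hg0le : g0 ≤ gstar * σm / (2 + δ - σm))
    (w : ℕ → EuclideanSpace ℝ (Fin d))
    (v : ℕ → EuclideanSpace ℝ (Fin d))
    (hw0 : ‖w 0‖ = 1)
    (hv : ∀ t, v t = (w t - (ContinuousLinearMap.adjoint A) (A (w t))) +
      (gstar / g0) • (ContinuousLinearMap.adjoint A) (A wstar))
    (hrec : ∀ t, w (t + 1) = ‖v t‖⁻¹ • v t) :
    (∀ u : EuclideanSpace ℝ (Fin d), ‖u‖ = 1 →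
      1 + δ ≤ ‖(u - (ContinuousLinearMap.adjoint A) (A u)) +
        (gstar / g0) • (ContinuousLinearMap.adjoint A) (A wstar)‖) ∧
    (∀ T : ℕ,
      ‖(Submodule.orthogonalProjectionOnto (LinearMap.ker (A : EuclideanSpace ℝ (Fin d) →ₗ[ℝ] EuclideanSpace ℝ (Fin m))) (w T) : EuclideanSpace ℝ (Fin d))‖ ≤
        ((1 + δ)⁻¹) ^ T *
          ‖(Submodule.orthogonalProjectionOnto (LinearMap.ker (A : EuclideanSpace ℝ (Fin d) →ₗ[ℝ] EuclideanSpace ℝ (Fin m))) (w 0) : EuclideanSpace ℝ (Fin d))‖) ∧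
    (∀ ε : ℝ, 0 < ε → ∀ T₁ : ℕ,
      Real.log
          (‖(Submodule.orthogonalProjectionOnto (LinearMap.ker (A : EuclideanSpace ℝ (Fin d) →ₗ[ℝ] EuclideanSpace ℝ (Fin m))) (w 0) : EuclideanSpace ℝ (Fin d))‖ / ε) /
          Real.log (1 + δ) ≤ (T₁ : ℝ) →
      ‖(Submodule.orthogonalProjectionOnto (LinearMap.ker (A : EuclideanSpace ℝ (Fin d) →ₗ[ℝ] EuclideanSpace ℝ (Fin m))) (w T₁) : EuclideanSpace ℝ (Fin d))‖ ≤ ε) := by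
  have hσ1 : σm ≤ 1 := by
    have h1 := hmin wstar hwsrow
    have h2 := hmax wstar
    rw [hws] at h1 h2
    nlinarith [norm_nonneg (A wstar)]
  -- Part 1
  have key : ∀ u : EuclideanSpace ℝ (Fin d), ‖u‖ = 1 →
      1 + δ ≤ ‖(u - (ContinuousLinearMap.adjoint A) (A u)) +
        (gstar / g0) • (ContinuousLinearMap.adjoint A) (A wstar)‖ := by
    intro u hu
    set r : ℝ := gstar / g0 with hr
    have hrpos : 0 < r := div_pos hgs hg0
    set wp : EuclideanSpace ℝ (Fin d) := (ContinuousLinearMap.adjoint A) (A wstar) with hwp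
    set u₀ : EuclideanSpace ℝ (Fin d) :=
      (Submodule.orthogonalProjectionOnto (LinearMap.ker (A : EuclideanSpace ℝ (Fin d) →ₗ[ℝ] EuclideanSpace ℝ (Fin m))) u : EuclideanSpace ℝ (Fin d)) with hu₀
    set u₁ : EuclideanSpace ℝ (Fin d) := u - u₀ with hu₁
    have hu₀K : u₀ ∈ LinearMap.ker (A : EuclideanSpace ℝ (Fin d) →ₗ[ℝ] EuclideanSpace ℝ (Fin m)) := Submodule.coe_mem _
    have hu₁V : u₁ ∈ (LinearMap.ker (A : EuclideanSpace ℝ (Fin d) →ₗ[ℝ] EuclideanSpace ℝ (Fin m)))ᗮ := by exact Submodule.sub_starProjection_mem_orthogonal (K := LinearMap.ker (A : EuclideanSpace ℝ (Fin d) →ₗ[ℝ] EuclideanSpace ℝ (Fin m))) u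
    have hAu₀ : A u₀ = 0 := hu₀K
    have hsplit : u = u₀ + u₁ := by rw [hu₁]; abel
    have hperp : (inner ℝ u₀ u₁ : ℝ) = 0 :=
      Submodule.inner_right_of_mem_orthogonal hu₀K hu₁V
    have hnorm1 : ‖u₁‖ ≤ 1 := by
      have hp := norm_add_sq_real u₀ u₁
      rw [← hsplit, hu, hperp] at hp
      nlinarith [norm_nonneg u₀, norm_nonneg u₁]
    have hwpnorm : σm ≤ ‖wp‖ := by
      have h1 : σm * ‖wstar‖^2 ≤ ‖A wstar‖^2 := hmin wstar hwsrow
      have h2 : (inner ℝ wp wstar : ℝ) = ‖A wstar‖^2 := by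
        rw [hwp, ContinuousLinearMap.adjoint_inner_left, real_inner_self_eq_norm_sq]
      have h3 := real_inner_le_norm wp wstar
      rw [h2, hws] at h3
      rw [hws] at h1
      nlinarith
    set v₁ : EuclideanSpace ℝ (Fin d) :=
      (u₁ - (ContinuousLinearMap.adjoint A) (A u₁)) + r • wp with hv₁
    have hv₁V : v₁ ∈ (LinearMap.ker (A : EuclideanSpace ℝ (Fin d) →ₗ[ℝ] EuclideanSpace ℝ (Fin m)))ᗮ := by
      apply Submodule.add_mem
      · exact Submodule.sub_mem _ hu₁V (adj_mem_orth A _)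
      · exact Submodule.smul_mem _ _ (adj_mem_orth A _)
    have hexpr : (u - (ContinuousLinearMap.adjoint A) (A u)) + r • wp = u₀ + v₁ := by
      have hAu : A u = A u₁ := by rw [hsplit, map_add, hAu₀, zero_add]
      rw [hAu, hv₁]
      nth_rewrite 1 [hsplit]
      abel
    have hSu₁ : ‖u₁ - (ContinuousLinearMap.adjoint A) (A u₁)‖ ≤ (1 - σm) * ‖u₁‖ :=
      contraction A hmax hσ1 hmin u₁ hu₁V
    have hv₁norm : r * σm - (1 - σm) ≤ ‖v₁‖ := by
      have h1 : ‖r • wp‖ ≤ ‖v₁‖ + ‖u₁ - (ContinuousLinearMap.adjoint A) (A u₁)‖ := by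
        have e : r • wp = v₁ - (u₁ - (ContinuousLinearMap.adjoint A) (A u₁)) := by
          rw [hv₁]; abel
        rw [e]; exact norm_sub_le _ _
      have h2 : ‖r • wp‖ = r * ‖wp‖ := by
        rw [norm_smul, Real.norm_of_nonneg hrpos.le]
      have h3 : (1 - σm) * ‖u₁‖ ≤ (1 - σm) * 1 :=
        mul_le_mul_of_nonneg_left hnorm1 (by linarith)
      linarith [mul_le_mul_of_nonneg_left hwpnorm hrpos.le, hSu₁]
    have hperp2 : (inner ℝ u₀ v₁ : ℝ) = 0 :=
      Submodule.inner_right_of_mem_orthogonal hu₀K hv₁V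
    have hfinal : ‖v₁‖ ≤ ‖u₀ + v₁‖ := by
      have hp := norm_add_sq_real u₀ v₁
      rw [hperp2] at hp
      nlinarith [norm_nonneg u₀, norm_nonneg (u₀ + v₁), norm_nonneg v₁]
    have hrσ : 2 + δ - σm ≤ r * σm := by
      have hden : 0 < 2 + δ - σm := by linarith
      have h1 : g0 * (2 + δ - σm) ≤ gstar * σm := (le_div_iff₀ hden).mp hg0le
      rw [hr, div_mul_eq_mul_div, le_div_iff₀ hg0]
      linarith
    rw [hexpr]
    linarith
  -- unit norms along the trajectory
  have hvnorm : ∀ t, ‖w t‖ = 1 → 1 + δ ≤ ‖v t‖ := by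
    intro t ht; rw [hv t]; exact key (w t) ht
  have hunit : ∀ t, ‖w t‖ = 1 := by
    intro t
    induction t with
    | zero => exact hw0
    | succ n ih =>
      have h1 := hvnorm n ih
      have h2 : (0:ℝ) < ‖v n‖ := by linarith
      rw [hrec n, norm_smul, Real.norm_eq_abs, abs_inv, abs_of_pos h2,
        inv_mul_cancel₀ h2.ne']
  -- projection of v equals projection of w
  have hPv : ∀ t, Submodule.orthogonalProjectionOnto (LinearMap.ker (A : EuclideanSpace ℝ (Fin d) →ₗ[ℝ] EuclideanSpace ℝ (Fin m))) (v t)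
      = Submodule.orthogonalProjectionOnto (LinearMap.ker (A : EuclideanSpace ℝ (Fin d) →ₗ[ℝ] EuclideanSpace ℝ (Fin m))) (w t) := by
    intro t
    rw [hv t, map_add, map_sub, map_smul,
      Submodule.orthogonalProjectionOnto_apply_of_mem_orthogonal
        (adj_mem_orth A (A (w t))),
      Submodule.orthogonalProjectionOnto_apply_of_mem_orthogonal
        (adj_mem_orth A (A wstar))]
    simp
  have hstep : ∀ t,
      ‖(Submodule.orthogonalProjectionOnto (LinearMap.ker (A : EuclideanSpace ℝ (Fin d) →ₗ[ℝ] EuclideanSpace ℝ (Fin m))) (w (t+1)) : EuclideanSpace ℝ (Fin d))‖ ≤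
        (1+δ)⁻¹ * ‖(Submodule.orthogonalProjectionOnto (LinearMap.ker (A : EuclideanSpace ℝ (Fin d) →ₗ[ℝ] EuclideanSpace ℝ (Fin m))) (w t) : EuclideanSpace ℝ (Fin d))‖ := by
    intro t
    have h1 := hvnorm t (hunit t)
    have h2 : (0:ℝ) < ‖v t‖ := by linarith
    have h3 : Submodule.orthogonalProjectionOnto (LinearMap.ker (A : EuclideanSpace ℝ (Fin d) →ₗ[ℝ] EuclideanSpace ℝ (Fin m))) (w (t+1))
        = ‖v t‖⁻¹ • Submodule.orthogonalProjectionOnto (LinearMap.ker (A : EuclideanSpace ℝ (Fin d) →ₗ[ℝ] EuclideanSpace ℝ (Fin m))) (v t) := by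
      rw [hrec t, map_smul]
    rw [h3, hPv t]
    rw [Submodule.coe_smul, norm_smul, Real.norm_eq_abs, abs_inv, abs_of_pos h2]
    apply mul_le_mul_of_nonneg_right _ (norm_nonneg _)
    exact inv_anti₀ (by linarith) h1
  have part2 : ∀ T : ℕ,
      ‖(Submodule.orthogonalProjectionOnto (LinearMap.ker (A : EuclideanSpace ℝ (Fin d) →ₗ[ℝ] EuclideanSpace ℝ (Fin m))) (w T) : EuclideanSpace ℝ (Fin d))‖ ≤
        ((1 + δ)⁻¹) ^ T *
          ‖(Submodule.orthogonalProjectionOnto (LinearMap.ker (A : EuclideanSpace ℝ (Fin d) →ₗ[ℝ] EuclideanSpace ℝ (Fin m))) (w 0) : EuclideanSpace ℝ (Fin d))‖ := by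
    intro T
    induction T with
    | zero => simp
    | succ n ih =>
      have hnn : (0:ℝ) ≤ (1+δ)⁻¹ := by positivity
      calc ‖(Submodule.orthogonalProjectionOnto (LinearMap.ker (A : EuclideanSpace ℝ (Fin d) →ₗ[ℝ] EuclideanSpace ℝ (Fin m))) (w (n+1)) : EuclideanSpace ℝ (Fin d))‖
          ≤ (1+δ)⁻¹ * ‖(Submodule.orthogonalProjectionOnto (LinearMap.ker (A : EuclideanSpace ℝ (Fin d) →ₗ[ℝ] EuclideanSpace ℝ (Fin m))) (w n) : EuclideanSpace ℝ (Fin d))‖ :=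
            hstep n
        _ ≤ (1+δ)⁻¹ * (((1 + δ)⁻¹) ^ n *
              ‖(Submodule.orthogonalProjectionOnto (LinearMap.ker (A : EuclideanSpace ℝ (Fin d) →ₗ[ℝ] EuclideanSpace ℝ (Fin m))) (w 0) : EuclideanSpace ℝ (Fin d))‖) :=
            mul_le_mul_of_nonneg_left ih hnn
        _ = ((1 + δ)⁻¹) ^ (n+1) *
              ‖(Submodule.orthogonalProjectionOnto (LinearMap.ker (A : EuclideanSpace ℝ (Fin d) →ₗ[ℝ] EuclideanSpace ℝ (Fin m))) (w 0) : EuclideanSpace ℝ (Fin d))‖ := by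
            ring
  refine ⟨key, part2, ?_⟩
  intro ε hε T₁ hT₁
  set N : ℝ := ‖(Submodule.orthogonalProjectionOnto (LinearMap.ker (A : EuclideanSpace ℝ (Fin d) →ₗ[ℝ] EuclideanSpace ℝ (Fin m))) (w 0) : EuclideanSpace ℝ (Fin d))‖
    with hN
  have hNnonneg : 0 ≤ N := norm_nonneg _
  have h1δ : (1:ℝ) < 1 + δ := by linarith
  have hlogδ : 0 < Real.log (1+δ) := Real.log_pos h1δ
  have hbound := part2 T₁
  have hpow : (0:ℝ) < (1+δ)^T₁ := by positivity
  have hmain : N ≤ ε * (1+δ)^T₁ := by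
    rcases eq_or_lt_of_le hNnonneg with h0 | h0
    · rw [← h0]; positivity
    · have hlog : Real.log (N/ε) ≤ T₁ * Real.log (1+δ) := by
        rw [div_le_iff₀ hlogδ] at hT₁
        linarith
      have hlog2 : Real.log (N/ε) ≤ Real.log ((1+δ)^T₁) := by
        rw [Real.log_pow]; linarith
      have hNε : N / ε ≤ (1+δ)^T₁ := by
        calc N/ε = Real.exp (Real.log (N/ε)) := (Real.exp_log (div_pos h0 hε)).symm
          _ ≤ Real.exp (Real.log ((1+δ)^T₁)) := Real.exp_le_exp.mpr hlog2
          _ = (1+δ)^T₁ := Real.exp_log hpow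
      rw [div_le_iff₀ hε] at hNε
      rw [mul_comm]
      exact hNε
  have hlast : ((1 + δ)⁻¹) ^ T₁ * N ≤ ε := by
    have hcancel : ((1+δ)⁻¹)^T₁ * (1+δ)^T₁ = 1 := by
      rw [← mul_pow, inv_mul_cancel₀ (by linarith : (1+δ:ℝ) ≠ 0), one_pow]
    calc ((1 + δ)⁻¹) ^ T₁ * N ≤ ((1+δ)⁻¹)^T₁ * (ε * (1+δ)^T₁) :=
          mul_le_mul_of_nonneg_left hmain (by positivity)
      _ = ε * (((1+δ)⁻¹)^T₁ * (1+δ)^T₁) := by ring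
      _ = ε := by rw [hcancel, mul_one]
  linarith
end

section
/- Under rPGD for orthogonal A (AAᵀ = I) in Phase I with fixed g: if 0 < g_0 < g* and w_0 is a unit vector, then with η_t = 1/g_0² and γ_t = 0, for all t ≥ 0: ‖w_{t+1}^⊥‖² ≤ (g_0²/(g*)²)·‖w_t^⊥‖², and hence after T_1 = log(1/ε²)/log((g*)²/g_0²) iterations, ‖w_{T_1}^⊥‖² ≤ ε². -/
set_option autoImplicit false
set_option maxHeartbeats 1000000

/-- Phase I of rPGD for orthogonal `A` (`AAᵀ = I`), with fixed scale
`g = g_0` (`0 < g_0 < g*`), stepsize `η = 1/g_0²`, `γ = 0`, unit `w_0`: writing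
`w^⊥ = (I − AᵀA)w`, one has `‖w_{t+1}^⊥‖² ≤ (g_0²/(g*)²)·‖w_t^⊥‖²` for all `t`, and
hence `‖w_{T₁}^⊥‖² ≤ ε²` after `T₁ = log(1/ε²)/log((g*)²/g_0²)` iterations. -/
theorem stmt19 (m d : ℕ)
    (A : EuclideanSpace ℝ (Fin d) →L[ℝ] EuclideanSpace ℝ (Fin m))
    (hA : A.comp (ContinuousLinearMap.adjoint A) =
      ContinuousLinearMap.id ℝ (EuclideanSpace ℝ (Fin m)))
    (gstar g0 : ℝ) (hg0 : 0 < g0) (hg0lt : g0 < gstar)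
    (wstar : EuclideanSpace ℝ (Fin d)) (hws : ‖wstar‖ = 1)
    (hwsrow : wstar ∈ (LinearMap.ker A.toLinearMap)ᗮ)
    (w : ℕ → EuclideanSpace ℝ (Fin d))
    (v : ℕ → EuclideanSpace ℝ (Fin d))
    (hw0 : ‖w 0‖ = 1)
    (hv : ∀ t, v t = w t -
      g0⁻¹ • (ContinuousLinearMap.adjoint A) (A (g0 • w t - gstar • wstar)))
    (hrec : ∀ t, w (t + 1) = ‖v t‖⁻¹ • v t) :
    (∀ t : ℕ,
      ‖w (t + 1) - (ContinuousLinearMap.adjoint A) (A (w (t + 1)))‖^2 ≤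
        (g0^2 / gstar^2) * ‖w t - (ContinuousLinearMap.adjoint A) (A (w t))‖^2) ∧
    (∀ ε : ℝ, 0 < ε → ∀ T₁ : ℕ,
      Real.log (1 / ε^2) / Real.log (gstar^2 / g0^2) ≤ (T₁ : ℝ) →
      ‖w T₁ - (ContinuousLinearMap.adjoint A) (A (w T₁))‖^2 ≤ ε^2) := by
  have hgstar : 0 < gstar := hg0.trans hg0lt
  have hratio : (0:ℝ) < gstar / g0 := div_pos hgstar hg0
  set B := ContinuousLinearMap.adjoint A with hBdef
  have hAB : ∀ x, A (B x) = x := by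
    intro x
    have := ContinuousLinearMap.ext_iff.mp hA x
    simpa using this
  -- perp t is the orthogonal component of w t
  set perp : ℕ → EuclideanSpace ℝ (Fin d) := fun t => w t - B (A (w t)) with hperpdef
  have hkerP : ∀ x : EuclideanSpace ℝ (Fin d), A (x - B (A x)) = 0 := by
    intro x; simp [hAB]
  -- B (A wstar) = wstar
  have hstar : B (A wstar) = wstar := by
    set x := B (A wstar) - wstar with hx
    have hAx : A x = 0 := by simp [hx, hAB]
    have h1 : (inner ℝ x wstar : ℝ) = 0 :=
      hwsrow x (by simpa [LinearMap.mem_ker] using hAx)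
    have h2 : (inner ℝ (B (A wstar)) x : ℝ) = 0 := by
      calc (inner ℝ (B (A wstar)) x : ℝ) = inner ℝ (A wstar) (A x) :=
            ContinuousLinearMap.adjoint_inner_left A x (A wstar)
        _ = 0 := by rw [hAx, inner_zero_right]
    have hxx : (inner ℝ x x : ℝ) = 0 := by
      have h1' : (inner ℝ wstar x : ℝ) = 0 := by rw [real_inner_comm]; exact h1
      have : (inner ℝ x x : ℝ) = inner ℝ (B (A wstar)) x - inner ℝ wstar x := by
        rw [hx, inner_sub_left]
      rw [this, h1', h2, sub_zero]
    exact sub_eq_zero.mp (inner_self_eq_zero.mp hxx)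
  have hv' : ∀ t, v t = perp t + (gstar / g0) • wstar := by
    intro t
    rw [hv t]
    simp only [map_sub, map_smul, hstar, hperpdef]
    match_scalars <;> field_simp
  have hAperp : ∀ t, A (perp t) = 0 := fun t => hkerP (w t)
  have hinner : ∀ t, (inner ℝ (perp t) wstar : ℝ) = 0 := by
    intro t
    exact hwsrow (perp t) (by simpa [LinearMap.mem_ker] using hAperp t)
  have hnormv : ∀ t, ‖v t‖^2 = ‖perp t‖^2 + (gstar / g0)^2 := by
    intro t
    rw [hv' t, norm_add_sq_real, real_inner_smul_right, hinner t, mul_zero,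
      norm_smul, hws, mul_one, Real.norm_eq_abs, abs_of_pos hratio]
    ring
  have hvsq_ge : ∀ t, (gstar / g0)^2 ≤ ‖v t‖^2 := by
    intro t; rw [hnormv t]; nlinarith [sq_nonneg ‖perp t‖]
  have hvpos : ∀ t, 0 < ‖v t‖ := by
    intro t
    have h : (0:ℝ) < ‖v t‖^2 := lt_of_lt_of_le (by positivity) (hvsq_ge t)
    nlinarith [norm_nonneg (v t)]
  have hperp_rec : ∀ t, perp (t + 1) = ‖v t‖⁻¹ • perp t := by
    intro t
    have hPv : B (A (v t)) = (gstar / g0) • wstar := by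
      rw [hv' t]
      simp only [map_add, map_smul, hstar]
      rw [hAperp t]
      simp
    have h1 : perp (t+1) = ‖v t‖⁻¹ • (v t - B (A (v t))) := by
      simp only [hperpdef, hrec t, map_smul, smul_sub]
    rw [h1, hPv, hv' t]
    simp
  have key : ∀ t, ‖perp (t+1)‖^2 ≤ (g0^2 / gstar^2) * ‖perp t‖^2 := by
    intro t
    rw [hperp_rec t, norm_smul, mul_pow]
    have h1 : ‖(‖v t‖⁻¹ : ℝ)‖^2 = (‖v t‖^2)⁻¹ := by
      rw [Real.norm_eq_abs, abs_inv, abs_of_nonneg (norm_nonneg _), ← inv_pow]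
    rw [h1]
    have h2 : (‖v t‖^2)⁻¹ ≤ g0^2 / gstar^2 := by
      rw [inv_le_iff_one_le_mul₀ (lt_of_lt_of_le (by positivity) (hvsq_ge t))]
      have h3 : g0^2 / gstar^2 * ((gstar/g0)^2) = 1 := by field_simp
      nlinarith [hvsq_ge t, div_pos (pow_pos hg0 2) (pow_pos hgstar 2)]
    nlinarith [sq_nonneg ‖perp t‖]
  have hperp0 : ‖perp 0‖^2 ≤ 1 := by
    have horth : (inner ℝ (B (A (w 0))) (perp 0) : ℝ) = 0 := by
      calc (inner ℝ (B (A (w 0))) (perp 0) : ℝ) = inner ℝ (A (w 0)) (A (perp 0)) :=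
            ContinuousLinearMap.adjoint_inner_left A (perp 0) (A (w 0))
        _ = 0 := by rw [hAperp 0, inner_zero_right]
    have hdecomp : ‖w 0‖^2 = ‖B (A (w 0))‖^2 + ‖perp 0‖^2 := by
      have hw' : w 0 = B (A (w 0)) + perp 0 := by simp [hperpdef]
      calc ‖w 0‖^2 = ‖B (A (w 0)) + perp 0‖^2 := by rw [← hw']
        _ = ‖B (A (w 0))‖^2 + 2 * inner ℝ (B (A (w 0))) (perp 0) + ‖perp 0‖^2 :=
            norm_add_sq_real _ _
        _ = ‖B (A (w 0))‖^2 + ‖perp 0‖^2 := by rw [horth]; ring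
    rw [hw0] at hdecomp
    nlinarith [sq_nonneg ‖B (A (w 0))‖]
  constructor
  · intro t; exact key t
  · intro ε hε T₁ hT₁
    have hgeom : ∀ T : ℕ, ‖perp T‖^2 ≤ (g0^2 / gstar^2)^T := by
      intro T
      induction T with
      | zero => simpa using hperp0
      | succ n ih =>
          calc ‖perp (n+1)‖^2 ≤ (g0^2 / gstar^2) * ‖perp n‖^2 := key n
            _ ≤ (g0^2 / gstar^2) * (g0^2 / gstar^2)^n :=
                mul_le_mul_of_nonneg_left ih (by positivity)
            _ = (g0^2 / gstar^2)^(n+1) := by ring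
    have hr : (1:ℝ) < gstar^2 / g0^2 := by
      rw [lt_div_iff₀ (by positivity)]
      nlinarith
    have hlogr : 0 < Real.log (gstar^2 / g0^2) := Real.log_pos hr
    have hTlog : Real.log (1 / ε^2) ≤ (T₁ : ℝ) * Real.log (gstar^2 / g0^2) := by
      rw [div_le_iff₀ hlogr] at hT₁
      linarith
    have hfinal : (g0^2 / gstar^2)^T₁ ≤ ε^2 := by
      have hlog : Real.log ((g0^2 / gstar^2)^T₁) ≤ Real.log (ε^2) := by
        rw [Real.log_pow]
        have h1 : Real.log (g0^2 / gstar^2) = - Real.log (gstar^2 / g0^2) := by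
          rw [← Real.log_inv]
          congr 1
          field_simp
        have h2 : Real.log (1 / ε^2) = - Real.log (ε^2) := by
          rw [one_div, Real.log_inv]
        rw [h1]
        rw [h2] at hTlog
        push_cast
        linarith
      have := Real.exp_le_exp.mpr hlog
      rwa [Real.exp_log (by positivity), Real.exp_log (by positivity)] at this
    exact le_trans (hgeom T₁) hfinal
end
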